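/- Let φ : ℚ ⊗ E → ℚ ⊗ E' be an isomorphism between the rationalizations of two modules E, E' over a p-torsion-free ring, such that Hom(E, E') = p^n · W for a complete DVR W with uniformizer p and some integer n. Then φ restricts to an isomorphism p^n E ≅ E'. Abstract form: if Hom(E,E') is free of rank 1 over W generated in 'degree' p^n relative to φ, then the rescaled map p^{-n}·(restriction of φ) : E → E' is invertible. -/

import Mathlib

/-- Let `W` be a discrete valuation ring with uniformizer `p`, and `E`, `E'`
finitely generated `p`-torsion-free `W`-modules.  Suppose `Hom(E, E')` is free of
rank `1` generated by `ψ`, that `ψ` is not divisible by `p`, and that `ψ ⊗ ℚ` is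
an isomorphism (the kernel of `ψ` is killed by a power of `p`, and its cokernel
is killed by powers of `p`).  Then `ψ : E → E'` is itself an isomorphism; i.e.
any isomorphism `φ : ℚ ⊗ E ≅ ℚ ⊗ E'` restricts, after rescaling by `p^{-n}`, to
an isomorphism `E ≅ E'`. -/
theorem stmt_17 (W : Type*) [CommRing W] [IsDomain W] [IsDiscreteValuationRing W]
    (p : W) (hp : Irreducible p)
    (E E' : Type*) [AddCommGroup E] [Module W E] [AddCommGroup E'] [Module W E']
    [Module.Finite W E] [Module.Finite W E']
    (hEtf : ∀ x : E, p • x = 0 → x = 0)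
    (hE'tf : ∀ y : E', p • y = 0 → y = 0)
    (ψ : E →ₗ[W] E')
    (hgen : ∀ φ : E →ₗ[W] E', ∃ a : W, φ = a • ψ)
    (hnotdiv : ¬ ∃ φ : E →ₗ[W] E', ψ = p • φ)
    (hker : ∀ x : E, ψ x = 0 → ∃ n : ℕ, p ^ n • x = 0)
    (hcoker : ∀ y : E', ∃ (n : ℕ) (x : E), p ^ n • y = ψ x) :
    Function.Bijective ψ := by
  classical
  -- p-power torsion-freeness
  have hEpow : ∀ (n : ℕ) (x : E), p ^ n • x = 0 → x = 0 := by
    intro n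
    induction n with
    | zero => intro x hx; simpa using hx
    | succ k ih =>
      intro x hx
      rw [pow_succ, mul_smul] at hx
      exact hEtf x (ih _ hx)
  have hE'pow : ∀ (n : ℕ) (y : E'), p ^ n • y = 0 → y = 0 := by
    intro n
    induction n with
    | zero => intro y hy; simpa using hy
    | succ k ih =>
      intro y hy
      rw [pow_succ, mul_smul] at hy
      exact hE'tf y (ih _ hy)
  -- torsion-freeness
  haveI : NoZeroSMulDivisors W E := by
    refine ⟨fun {a x} hax => ?_⟩
    by_cases ha : a = 0
    · exact Or.inl ha
    · obtain ⟨n, u, rfl⟩ := IsDiscreteValuationRing.eq_unit_mul_pow_irreducible ha hp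
      right
      rw [mul_smul] at hax
      have : (p : W) ^ n • x = 0 := by
        have := congrArg (fun z => ((u⁻¹ : Wˣ) : W) • z) hax
        simpa [smul_smul, ← mul_assoc, Units.inv_mul] using this
      exact hEpow n x this
  haveI : NoZeroSMulDivisors W E' := by
    refine ⟨fun {a y} hay => ?_⟩
    by_cases ha : a = 0
    · exact Or.inl ha
    · obtain ⟨n, u, rfl⟩ := IsDiscreteValuationRing.eq_unit_mul_pow_irreducible ha hp
      right
      rw [mul_smul] at hay
      have : (p : W) ^ n • y = 0 := by
        have := congrArg (fun z => ((u⁻¹ : Wˣ) : W) • z) hay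
        simpa [smul_smul, ← mul_assoc, Units.inv_mul] using this
      exact hE'pow n y this
  -- injectivity of ψ
  have hinj : Function.Injective ψ := by
    rw [← LinearMap.ker_eq_bot]
    rw [eq_bot_iff]
    intro x hx
    obtain ⟨n, hn⟩ := hker x (LinearMap.mem_ker.mp hx)
    exact hEpow n x hn
  -- uniform N killing the cokernel
  obtain ⟨s, hs⟩ := Module.Finite.fg_top (R := W) (M := E')
  set n0 : E' → ℕ := fun y => (hcoker y).choose with hn0def
  have hn0 : ∀ y : E', ∃ x, p ^ n0 y • y = ψ x := fun y => (hcoker y).choose_spec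
  set N : ℕ := s.sup n0 with hNdef
  have hN : ∀ y : E', ∃ x, ψ x = p ^ N • y := by
    have hle : (⊤ : Submodule W E') ≤
        Submodule.comap ((p ^ N) • (LinearMap.id : E' →ₗ[W] E')) (LinearMap.range ψ) := by
      rw [← hs]
      apply Submodule.span_le.mpr
      intro y hy
      simp only [SetLike.mem_coe, Submodule.mem_comap, LinearMap.smul_apply, LinearMap.id_coe,
        id_eq, LinearMap.mem_range]
      obtain ⟨x, hx⟩ := hn0 y
      refine ⟨p ^ (N - n0 y) • x, ?_⟩
      rw [map_smul, ← hx, smul_smul, ← pow_add]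
      congr 2
      have : n0 y ≤ N := Finset.le_sup hy
      omega
    intro y
    have := hle (Submodule.mem_top (x := y))
    simp only [Submodule.mem_comap, LinearMap.smul_apply, LinearMap.id_coe, id_eq,
      LinearMap.mem_range] at this
    obtain ⟨x, hx⟩ := this
    exact ⟨x, hx⟩
  -- construct a linear injection φ : E' → E
  let q : E' →ₗ[W] E' := (p ^ N) • LinearMap.id
  have hq : ∀ y, q y ∈ LinearMap.range ψ := by
    intro y
    obtain ⟨x, hx⟩ := hN y
    exact ⟨x, hx⟩
  let e : E ≃ₗ[W] LinearMap.range ψ := LinearEquiv.ofInjective ψ hinj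
  let φ : E' →ₗ[W] E := e.symm.toLinearMap ∘ₗ q.codRestrict (LinearMap.range ψ) hq
  have hψφ : ∀ y, ψ (φ y) = p ^ N • y := by
    intro y
    have h1 : e (φ y) = q.codRestrict (LinearMap.range ψ) hq y := by
      simp [φ, LinearEquiv.apply_symm_apply]
    have h2 : (e (φ y) : E') = ψ (φ y) := by
      simp [e, LinearEquiv.ofInjective_apply]
    rw [← h2, h1]
    rfl
  have hφinj : Function.Injective φ := by
    intro y z hyz
    have : p ^ N • y = p ^ N • z := by
      rw [← hψφ y, ← hψφ z, hyz]
    have hsub : p ^ N • (y - z) = 0 := by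
      rw [smul_sub, this, sub_self]
    have := hE'pow N _ hsub
    exact sub_eq_zero.mp this
  -- ranks are equal
  have hle1 : Module.finrank W E ≤ Module.finrank W E' :=
    LinearMap.finrank_le_finrank_of_injective hinj
  have hle2 : Module.finrank W E' ≤ Module.finrank W E :=
    LinearMap.finrank_le_finrank_of_injective hφinj
  have hrank : Module.finrank W E = Module.finrank W E' := le_antisymm hle1 hle2
  -- both modules are free; build an isomorphism
  haveI : Module.Free W E := Module.free_of_finite_type_torsion_free'
  haveI : Module.Free W E' := Module.free_of_finite_type_torsion_free'
  let bE := Module.Free.chooseBasis W E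
  let bE' := Module.Free.chooseBasis W E'
  have hcard : Fintype.card (Module.Free.ChooseBasisIndex W E) =
      Fintype.card (Module.Free.ChooseBasisIndex W E') := by
    rw [← Module.finrank_eq_card_chooseBasisIndex, ← Module.finrank_eq_card_chooseBasisIndex,
      hrank]
  let iso : E ≃ₗ[W] E' := bE.equiv bE' (Fintype.equivOfCardEq hcard)
  -- the isomorphism is a multiple of ψ; hence ψ is surjective
  obtain ⟨a, ha⟩ := hgen iso.toLinearMap
  have hsurj : Function.Surjective ψ := by
    intro y
    refine ⟨a • iso.symm y, ?_⟩
    have := congrArg (fun f : E →ₗ[W] E' => f (iso.symm y)) ha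
    simp only [LinearEquiv.coe_coe, LinearEquiv.apply_symm_apply, LinearMap.smul_apply] at this
    rw [map_smul, ← this]
  exact ⟨hinj, hsurj⟩
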